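/- arXiv:2203.08027 — 2 statements merged into one kernel-verified Lean document; each statement's English description precedes it below -/
import Mathlib

section
/- Let k* be the minimal k such that the k-nearest-neighbor graph on X is connected. Then k* ≤ |X|/2. -/
open Finset

variable {X : Type*} [MetricSpace X] [Fintype X] [LinearOrder X]

/-- Tie-breaking key: `y` is compared to other points by distance to `x`,
with ties broken by the fixed linear order on `X`. -/
noncomputable def nnKey (x y : X) : ℝ ×ₗ X := toLex (dist x y, y)

noncomputable instance nnKeyDec (x : X) :
    DecidableRel (fun y z : X => nnKey x y ≤ nnKey x z) :=
  fun _ _ => Classical.dec _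

instance (x : X) : IsTrans X (fun y z => nnKey x y ≤ nnKey x z) :=
  ⟨fun _ _ _ h1 h2 => le_trans h1 h2⟩

instance (x : X) : IsAntisymm X (fun y z => nnKey x y ≤ nnKey x z) :=
  ⟨fun a b h1 h2 => by
    have h := le_antisymm h1 h2
    simpa [nnKey] using congrArg (fun p => (ofLex p).2) h⟩

instance (x : X) : IsTotal X (fun y z => nnKey x y ≤ nnKey x z) :=
  ⟨fun _ _ => le_total _ _⟩

/-- The points of `X \ {x}` listed in order of increasing distance to `x`
(ties broken by the fixed linear order). -/
noncomputable def nnList (x : X) : List X :=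
  (Finset.univ.erase x).sort (fun y z => nnKey x y ≤ nnKey x z)

/-- `nbhd k x` is the set `N_k(x)` of the `k` nearest neighbors of `x`. -/
noncomputable def nbhd (k : ℕ) (x : X) : Finset X :=
  ((nnList x).take k).toFinset

/-- The `k`-nearest-neighbor graph: `x — y` iff `y ∈ N_k(x)` or `x ∈ N_k(y)`. -/
noncomputable def nnGraph (k : ℕ) : SimpleGraph X where
  Adj x y := x ≠ y ∧ (y ∈ nbhd k x ∨ x ∈ nbhd k y)
  symm := by
    constructor
    intro x y h
    exact ⟨h.1.symm, h.2.symm⟩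
  loopless := by constructor; intro x h; exact h.1 rfl

/-- The cluster (connected component of the `k`-NN graph) containing `x`. -/
noncomputable def nnCluster (k : ℕ) (x : X) : Finset X := by
  classical
  exact Finset.univ.filter (fun y => (nnGraph (X := X) k).Reachable x y)

/-- The partition of `X` into connected components of the `k`-NN graph:
the maximal `k`-NN clustering. -/
noncomputable def maxClusters (k : ℕ) : Finset (Finset X) :=
  Finset.univ.image (nnCluster (X := X) k)

/-- A partition of `X` each of whose cells contains the `k` nearest
neighbors of all of its elements. -/
def IsKNNClustering (k : ℕ) (P : Finset (Finset X)) : Prop :=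
  (∀ C ∈ P, C.Nonempty) ∧
  (∀ C ∈ P, ∀ D ∈ P, C ≠ D → Disjoint C D) ∧
  (P.sup id = Finset.univ) ∧
  (∀ C ∈ P, ∀ x ∈ C, nbhd k x ⊆ C)

/-- All pairwise distances are distinct (for distinct unordered pairs). -/
def DistinctDists (X : Type*) [MetricSpace X] : Prop :=
  ∀ x y x' y' : X, x ≠ y → x' ≠ y' → dist x y = dist x' y' →
    (x = x' ∧ y = y') ∨ (x = y' ∧ y = x')

/-- The nearest neighbor of `x` (meaningful when `|X| ≥ 2`). -/
noncomputable def nn (x : X) : X := ((nnList x).head?).getD x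


lemma mem_nnList {x y : X} : y ∈ nnList x ↔ y ∈ Finset.univ.erase x :=
  Finset.mem_sort _

lemma nnList_length (x : X) : (nnList x).length = Fintype.card X - 1 := by
  rw [nnList, Finset.length_sort, Finset.card_erase_of_mem (Finset.mem_univ x),
    Finset.card_univ]

lemma nnList_nodup (x : X) : (nnList x).Nodup := Finset.sort_nodup _ _

lemma card_nbhd (k : ℕ) (x : X) : (nbhd k x).card = min k (Fintype.card X - 1) := by
  rw [nbhd, List.toFinset_card_of_nodup ((nnList_nodup x).sublist (List.take_sublist _ _)),
    List.length_take, nnList_length]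

lemma mem_nnList_of_mem_nbhd {k : ℕ} {x y : X} (h : y ∈ nbhd k x) : y ∈ nnList x :=
  List.mem_of_mem_take (List.mem_toFinset.mp h)

lemma adj_of_mem_nbhd {k : ℕ} {x y : X} (h : y ∈ nbhd k x) : (nnGraph k).Adj x y := by
  have hne : y ∈ Finset.univ.erase x := mem_nnList.mp (mem_nnList_of_mem_nbhd h)
  exact ⟨(Finset.ne_of_mem_erase hne).symm, Or.inl h⟩

lemma card_nnCluster_ge (k : ℕ) (x : X) :
    min k (Fintype.card X - 1) + 1 ≤ (nnCluster k x).card := by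
  have hsub : insert x (nbhd k x) ⊆ nnCluster k x := by
    intro y hy
    simp only [nnCluster, Finset.mem_filter, Finset.mem_univ, true_and]
    rcases Finset.mem_insert.mp hy with rfl | hy
    · exact SimpleGraph.Reachable.refl _
    · exact (adj_of_mem_nbhd hy).reachable
  have hx : x ∉ nbhd k x := fun h =>
    Finset.ne_of_mem_erase (mem_nnList.mp (mem_nnList_of_mem_nbhd h)) rfl
  calc min k (Fintype.card X - 1) + 1 = (insert x (nbhd k x)).card := by
        rw [Finset.card_insert_of_notMem hx, card_nbhd]
    _ ≤ _ := Finset.card_le_card hsub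

/-- the minimal `k*` with connected k-NN graph satisfies k* ≤ |X|/2. -/
theorem kstar_le_half (h2 : 2 ≤ Fintype.card X) (kstar : ℕ)
    (hconn : (nnGraph (X := X) kstar).Connected)
    (hmin : ∀ j < kstar, ¬ (nnGraph (X := X) j).Connected) :
    kstar ≤ Fintype.card X / 2 := by
  classical
  rcases Nat.eq_zero_or_pos kstar with rfl | hk
  · exact Nat.zero_le _
  · set k := kstar - 1 with hkdef
    have hdis := hmin k (Nat.sub_lt hk one_pos)
    have hne : Nonempty X := Fintype.card_pos_iff.mp (by omega)
    have hnp : ¬ (nnGraph (X := X) k).Preconnected := fun hp => hdis ⟨hp⟩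
    simp only [SimpleGraph.Preconnected, not_forall] at hnp
    obtain ⟨x, z, hxz⟩ := hnp
    have hdisj : Disjoint (nnCluster k x) (nnCluster k z) := by
      rw [Finset.disjoint_left]
      intro y hy hz
      simp only [nnCluster, Finset.mem_filter, Finset.mem_univ, true_and] at hy hz
      exact hxz (hy.trans hz.symm)
    have hcard : (nnCluster k x).card + (nnCluster k z).card ≤ Fintype.card X := by
      rw [← Finset.card_union_of_disjoint hdisj, ← Finset.card_univ]
      exact Finset.card_le_card (Finset.subset_univ _)
    have h1 := card_nnCluster_ge (X := X) k x
    have h2' := card_nnCluster_ge (X := X) k z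
    have hmain : 2 * (min k (Fintype.card X - 1) + 1) ≤ Fintype.card X := by omega
    rcases Nat.lt_or_ge k (Fintype.card X - 1) with hlt | hge
    · have : min k (Fintype.card X - 1) = k := min_eq_left hlt.le
      omega
    · have : min k (Fintype.card X - 1) = Fintype.card X - 1 := min_eq_right hge
      omega
end

section
/- Every connected component of the (undirected) 1-nearest-neighbor graph of a finite metric space with distinct pairwise distances contains exactly one pair of mutual nearest neighbors. -/
open Finset

variable {X : Type*} [MetricSpace X] [Fintype X] [LinearOrder X]

section Aux

variable (h2 : 2 ≤ Fintype.card X)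
include h2

lemma nnList_ne_nil (x : X) : nnList x ≠ [] := by
  have hlen : (nnList x).length = (Finset.univ.erase x).card := Finset.length_sort _
  have hc : 1 ≤ (Finset.univ.erase x).card := by
    have := Finset.card_erase_of_mem (Finset.mem_univ x)
    rw [this, Finset.card_univ]
    omega
  intro h
  rw [h] at hlen
  simp at hlen
  omega

lemma nnList_cons (x : X) : ∃ t, nnList x = nn x :: t := by
  obtain ⟨a, t, h⟩ := List.exists_cons_of_ne_nil (nnList_ne_nil h2 x)
  have : nn x = a := by simp [nn, h]
  exact ⟨t, by rw [this, h]⟩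

lemma nn_ne (x : X) : nn x ≠ x := by
  obtain ⟨t, h⟩ := nnList_cons h2 x
  have : nn x ∈ nnList x := by rw [h]; exact List.mem_cons_self
  have : nn x ∈ Finset.univ.erase x := (Finset.mem_sort _).mp this
  exact (Finset.mem_erase.mp this).1

lemma nbhd_one (x : X) : nbhd 1 x = {nn x} := by
  obtain ⟨t, h⟩ := nnList_cons h2 x
  simp [nbhd, h]

lemma nn_min {x y : X} (hy : y ≠ x) : dist x (nn x) ≤ dist x y := by
  obtain ⟨t, h⟩ := nnList_cons h2 x
  have hmem : y ∈ nnList x :=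
    (Finset.mem_sort _).mpr (Finset.mem_erase.mpr ⟨hy, Finset.mem_univ y⟩)
  have hkey : nnKey x (nn x) ≤ nnKey x y := by
    rcases List.mem_cons.mp (by rwa [h] at hmem) with h' | h'
    · exact le_of_eq (by rw [h'])
    · have hs := Finset.pairwise_sort (r := fun y z : X => nnKey x y ≤ nnKey x z) (s := Finset.univ.erase x)
      rw [show ((Finset.univ.erase x).sort fun y z : X => nnKey x y ≤ nnKey x z) = nnList x
          from rfl, h, List.pairwise_cons] at hs
      exact hs.1 y h'
  rcases Prod.Lex.le_iff.mp hkey with h' | h'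
  · exact le_of_lt h'
  · exact le_of_eq h'.1

lemma adj_nn (x : X) : (nnGraph (X := X) 1).Adj x (nn x) :=
  ⟨(nn_ne h2 x).symm, Or.inl (by rw [nbhd_one h2]; exact Finset.mem_singleton_self _)⟩

lemma adj_cases {z w : X} (h : (nnGraph (X := X) 1).Adj z w) : nn z = w ∨ nn w = z := by
  rcases h.2 with h' | h'
  · rw [nbhd_one h2] at h'
    exact Or.inl (Finset.mem_singleton.mp h').symm
  · rw [nbhd_one h2] at h'
    exact Or.inr (Finset.mem_singleton.mp h').symm

end Aux

lemma mem_nnCluster {x y : X} :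
    y ∈ nnCluster (X := X) 1 x ↔ (nnGraph (X := X) 1).Reachable x y := by
  simp [nnCluster]

/-- Chains of nn-steps starting from a mutual pair stay in the pair. -/
lemma chain_stays {c d : X} (hc : nn c = d) (hdc : nn d = c) :
    ∀ z, Relation.ReflTransGen (fun u v : X => nn u = v) c z → z = c ∨ z = d := by
  intro z h
  induction h with
  | refl => exact Or.inl rfl
  | tail _ hstep ih =>
    rcases ih with h' | h'
    · rw [h', hc] at hstep
      exact Or.inr hstep.symm
    · rw [h', hdc] at hstep
      exact Or.inl hstep.symm

/-- From any vertex reachable from a mutual pair, the nn-chain leads back to the pair. -/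
lemma reach_chain (h2 : 2 ≤ Fintype.card X) {a b : X} (hab : nn a = b) (hba : nn b = a)
    {z : X} (h : (nnGraph (X := X) 1).Reachable a z) :
    Relation.ReflTransGen (fun u v : X => nn u = v) z a ∨
    Relation.ReflTransGen (fun u v : X => nn u = v) z b := by
  rw [SimpleGraph.reachable_iff_reflTransGen] at h
  induction h with
  | refl => exact Or.inl Relation.ReflTransGen.refl
  | @tail u w _ hadj ih =>
    rcases adj_cases h2 hadj with hn | hn
    · -- nn u = w
      rcases ih with hch | hch
      · rcases hch.cases_head with h' | ⟨v, hv1, hv2⟩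
        · subst h'
          have hwb : w = b := hn.symm.trans hab
          rw [hwb]
          exact Or.inr Relation.ReflTransGen.refl
        · rw [hn] at hv1; subst hv1; exact Or.inl hv2
      · rcases hch.cases_head with h' | ⟨v, hv1, hv2⟩
        · subst h'
          have hwa : w = a := hn.symm.trans hba
          rw [hwa]
          exact Or.inl Relation.ReflTransGen.refl
        · rw [hn] at hv1; subst hv1; exact Or.inr hv2
    · -- nn w = u
      rcases ih with hch | hch
      · exact Or.inl (Relation.ReflTransGen.head hn hch)
      · exact Or.inr (Relation.ReflTransGen.head hn hch)

/-- Existence of a mutual pair in each cluster. -/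
lemma exists_mutual (h2 : 2 ≤ Fintype.card X) (hd : DistinctDists X) (x₀ : X) :
    ∃ a, a ∈ nnCluster (X := X) 1 x₀ ∧ nn (nn a) = a := by
  classical
  have hne : (nnCluster (X := X) 1 x₀).Nonempty :=
    ⟨x₀, mem_nnCluster.mpr (SimpleGraph.Reachable.refl _)⟩
  obtain ⟨a, haC, hmin⟩ := Finset.exists_min_image (nnCluster (X := X) 1 x₀)
    (fun z => dist z (nn z)) hne
  refine ⟨a, haC, ?_⟩
  have hbC : nn a ∈ nnCluster (X := X) 1 x₀ :=
    mem_nnCluster.mpr ((mem_nnCluster.mp haC).trans (adj_nn h2 a).reachable)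
  have h1 : dist (nn a) (nn (nn a)) ≤ dist a (nn a) := by
    calc dist (nn a) (nn (nn a)) ≤ dist (nn a) a := nn_min h2 (Ne.symm (nn_ne h2 a))
    _ = dist a (nn a) := dist_comm _ _
  have h2' : dist a (nn a) ≤ dist (nn a) (nn (nn a)) := hmin _ hbC
  have heq : dist (nn a) (nn (nn a)) = dist a (nn a) := le_antisymm h1 h2'
  rcases hd (nn a) (nn (nn a)) a (nn a) (Ne.symm (nn_ne h2 (nn a))) (Ne.symm (nn_ne h2 a)) heq with
    ⟨h', _⟩ | ⟨_, h'⟩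
  · exact absurd h' (nn_ne h2 a)
  · exact h'

/-- every component of the 1-NN graph contains exactly one pair
of mutual nearest neighbors. -/
theorem unique_mutual_pair_in_component (h2 : 2 ≤ Fintype.card X)
    (hd : DistinctDists X) :
    ∀ C ∈ maxClusters (X := X) 1,
      ∃! p : X × X, p.1 ∈ C ∧ p.2 ∈ C ∧ p.1 < p.2 ∧
        nn p.1 = p.2 ∧ nn p.2 = p.1 := by
  classical
  intro C hC
  obtain ⟨x₀, -, rfl⟩ := Finset.mem_image.mp hC
  obtain ⟨a, haC, hmut⟩ := exists_mutual h2 hd x₀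
  have hbC : nn a ∈ nnCluster (X := X) 1 x₀ :=
    mem_nnCluster.mpr ((mem_nnCluster.mp haC).trans (adj_nn h2 a).reachable)
  have hne : a ≠ nn a := Ne.symm (nn_ne h2 a)
  have key : ∀ c, c ∈ nnCluster (X := X) 1 x₀ → nn (nn c) = c → a = c ∨ a = nn c := by
    intro c hcC hmc
    have hreach : (nnGraph (X := X) 1).Reachable a c :=
      (mem_nnCluster.mp haC).symm.trans (mem_nnCluster.mp hcC)
    rcases reach_chain h2 rfl hmut hreach with hch | hch
    · exact chain_stays rfl hmc a hch
    · rcases chain_stays rfl hmc (nn a) hch with h' | h'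
      · -- nn a = c
        right
        rw [← h', hmut]
      · -- nn a = nn c
        left
        rw [← hmut, h', hmc]
  rcases lt_or_gt_of_ne hne with hlt | hlt
  · refine ⟨(a, nn a), ⟨haC, hbC, hlt, rfl, hmut⟩, ?_⟩
    rintro ⟨c, d⟩ ⟨hcC, hdC, hcd, hncd, hndc⟩
    simp only at hcC hdC hcd hncd hndc
    rcases key c hcC (by rw [hncd]; exact hndc) with h' | h'
    · -- a = c
      rw [Prod.mk.injEq]
      refine ⟨h'.symm, ?_⟩
      rw [← hncd, ← h']
    · -- a = nn c : contradiction
      have hca : c < a := by rw [show a = d from h'.trans hncd]; exact hcd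
      have hac : a < c := by
        rw [← show nn a = c from by rw [h']; exact (by rw [hncd]; exact hndc : nn (nn c) = c)]
        exact hlt
      exact absurd (hca.trans hac) (lt_irrefl _)
  · refine ⟨(nn a, a), ⟨hbC, haC, hlt, hmut, rfl⟩, ?_⟩
    rintro ⟨c, d⟩ ⟨hcC, hdC, hcd, hncd, hndc⟩
    simp only at hcC hdC hcd hncd hndc
    rcases key c hcC (by rw [hncd]; exact hndc) with h' | h'
    · -- a = c : contradiction with order
      have hcon : a < nn a := by rw [h', hncd]; exact hcd
      exact absurd (hcon.trans hlt) (lt_irrefl _)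
    · -- a = nn c
      have hc : nn a = c := by rw [h']; rw [hncd]; exact hndc
      have had : a = d := h'.trans hncd
      rw [Prod.mk.injEq]
      exact ⟨hc.symm, had.symm⟩
end
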